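/- Let D = (V, A) be a digraph, let s be a nonnegative integer, let τ be a degree list function on V, and let C ⊆ V be a 2s(Δ_D + 1)-type set for (D, τ). If there exists a loopless arc set A' ⊆ (V × V) \ A with |A'| ≤ s such that deg_{D+A'}(v) ∈ τ(v) for all v ∈ V, then there exists a loopless arc set A* ⊆ (C × C) \ A with |A*| ≤ s such that deg_{D+A*}(v) ∈ τ(v) for all v ∈ V. -/

import Mathlib

/-- Indegree of vertex `v` in the digraph with arc set `A`. -/
def inDeg {V : Type*} [DecidableEq V] (A : Finset (V × V)) (v : V) : ℕ :=
  (A.filter fun a => a.2 = v).card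

/-- Outdegree of vertex `v` in the digraph with arc set `A`. -/
def outDeg {V : Type*} [DecidableEq V] (A : Finset (V × V)) (v : V) : ℕ :=
  (A.filter fun a => a.1 = v).card

/-- Degree pair (indegree, outdegree) of vertex `v`. -/
def deg {V : Type*} [DecidableEq V] (A : Finset (V × V)) (v : V) : ℕ × ℕ :=
  (inDeg A v, outDeg A v)

/-- Maximum in- or outdegree in the digraph with arc set `A`. -/
def maxDeg {V : Type*} [Fintype V] [DecidableEq V] (A : Finset (V × V)) : ℕ :=
  Finset.univ.sup fun v => max (inDeg A v) (outDeg A v)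

/-- The satisfied vertices of type `t` with respect to the degree list
function `τ`: vertices `v` with `deg v + t ∈ τ v` and `deg v ∈ τ v`,
i.e. `T_{D,τ}(t) \ U`. -/
def satType {V : Type*} [Fintype V] [DecidableEq V]
    (A : Finset (V × V)) (τ : V → Finset (ℕ × ℕ)) (t : ℕ × ℕ) : Finset V :=
  Finset.univ.filter fun v => deg A v + t ∈ τ v ∧ deg A v ∈ τ v

/-- `C` is an `α`-type set for `(D, τ)`: it contains all unsatisfied vertices
and, for each type `t ≠ (0,0)`, exactly `min |T_{D,τ}(t) \ U| α` satisfied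
vertices of type `t`. -/
def IsTypeSet {V : Type*} [Fintype V] [DecidableEq V]
    (A : Finset (V × V)) (τ : V → Finset (ℕ × ℕ)) (α : ℕ) (C : Finset V) : Prop :=
  (∀ v : V, deg A v ∉ τ v → v ∈ C) ∧
  ∀ t : ℕ × ℕ, t ≠ (0, 0) →
    (satType A τ t ∩ C).card = min (satType A τ t).card α

section Aux
variable {V : Type*} [DecidableEq V]

lemma inDeg_union {A B : Finset (V × V)} (h : Disjoint A B) (v : V) :
    inDeg (A ∪ B) v = inDeg A v + inDeg B v := by
  unfold inDeg
  rw [Finset.filter_union, Finset.card_union_of_disjoint (Finset.disjoint_filter_filter h)]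

lemma outDeg_union {A B : Finset (V × V)} (h : Disjoint A B) (v : V) :
    outDeg (A ∪ B) v = outDeg A v + outDeg B v := by
  unfold outDeg
  rw [Finset.filter_union, Finset.card_union_of_disjoint (Finset.disjoint_filter_filter h)]

lemma deg_union {A B : Finset (V × V)} (h : Disjoint A B) (v : V) :
    deg (A ∪ B) v = deg A v + deg B v := by
  simp [deg, inDeg_union h, outDeg_union h, Prod.ext_iff]

def meas (C : Finset V) (S : Finset (V × V)) : ℕ :=
  ∑ e ∈ S, ((if e.1 ∈ C then 0 else 1) + (if e.2 ∈ C then 0 else 1))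

lemma meas_zero_subset {C : Finset V} {S : Finset (V × V)} (h : meas C S = 0) :
    S ⊆ C ×ˢ C := by
  intro e he
  rw [meas, Finset.sum_eq_zero_iff] at h
  have := h e he
  rw [Finset.mem_product]
  constructor <;> by_contra hc <;> simp [hc] at this

end Aux

lemma swap_step {V : Type*} [Fintype V] [DecidableEq V]
    (A : Finset (V × V)) (hA : ∀ v : V, (v, v) ∉ A)
    (s : ℕ) (τ : V → Finset (ℕ × ℕ)) (C : Finset V)
    (hC : IsTypeSet A τ (2 * s * (maxDeg A + 1)) C)
    (A' : Finset (V × V)) (h1 : ∀ a ∈ A', a ∉ A) (h2 : ∀ v : V, (v, v) ∉ A')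
    (h3 : A'.card ≤ s) (h4 : ∀ v : V, deg (A ∪ A') v ∈ τ v)
    (u : V) (hu : u ∉ C) (hue : ∃ a ∈ A', a.1 = u ∨ a.2 = u) :
    ∃ A'' : Finset (V × V), (∀ a ∈ A'', a ∉ A) ∧ (∀ v : V, (v, v) ∉ A'') ∧
      A''.card ≤ s ∧ (∀ v : V, deg (A ∪ A'') v ∈ τ v) ∧ meas C A'' < meas C A' := by
  classical
  set Δ := maxDeg A with hΔdef
  set B : Finset (V × V) := A'.filter (fun a => a.1 = u ∨ a.2 = u) with hBdef
  have hBsub : B ⊆ A' := Finset.filter_subset _ _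
  have hBmem : ∀ e, e ∈ B ↔ e ∈ A' ∧ (e.1 = u ∨ e.2 = u) := by
    intro e; simp [hBdef]
  have hBne : B.Nonempty := by
    obtain ⟨a, ha, hor⟩ := hue
    exact ⟨a, (hBmem a).2 ⟨ha, hor⟩⟩
  set d := B.card with hddef
  have hd1 : 1 ≤ d := Finset.card_pos.2 hBne
  have hds : d ≤ s := le_trans (Finset.card_le_card hBsub) h3
  have hs1 : 1 ≤ s := le_trans hd1 hds
  -- no arc has both endpoints u
  have hone : ∀ e ∈ B, ¬(e.1 = u ∧ e.2 = u) := by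
    intro e he hbe
    have heq : e = (u, u) := Prod.ext hbe.1 hbe.2
    exact h2 u (hBsub (heq ▸ he))
  have hdisjAA' : Disjoint A A' := Finset.disjoint_right.mpr h1
  -- indeg/outdeg of A' at u equal those of B
  have hfilin : A'.filter (fun a => a.2 = u) = B.filter (fun a => a.2 = u) := by
    ext a; simp only [hBdef, Finset.mem_filter, Finset.filter_filter]; tauto
  have hfilout : A'.filter (fun a => a.1 = u) = B.filter (fun a => a.1 = u) := by
    ext a; simp only [hBdef, Finset.mem_filter, Finset.filter_filter]; tauto
  set t : ℕ × ℕ := (inDeg B u, outDeg B u) with htdef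
  have hdegA'u : deg A' u = t := by
    simp [deg, inDeg, outDeg, htdef, hfilin, hfilout]
  -- t ≠ (0,0)
  have htne : t ≠ (0, 0) := by
    obtain ⟨a, haB⟩ := hBne
    rcases ((hBmem a).1 haB).2 with h | h
    · intro hc
      have : a ∈ B.filter (fun x => x.1 = u) := Finset.mem_filter.2 ⟨haB, h⟩
      have hpos : 0 < outDeg B u := Finset.card_pos.2 ⟨a, this⟩
      rw [htdef] at hc
      simp only [Prod.ext_iff] at hc
      omega
    · intro hc
      have : a ∈ B.filter (fun x => x.2 = u) := Finset.mem_filter.2 ⟨haB, h⟩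
      have hpos : 0 < inDeg B u := Finset.card_pos.2 ⟨a, this⟩
      rw [htdef] at hc
      simp only [Prod.ext_iff] at hc
      omega
  have hut : deg A u ∈ τ u := by
    by_contra hc
    exact hu (hC.1 u hc)
  have hdegu : deg (A ∪ A') u = deg A u + t := by
    rw [deg_union hdisjAA', hdegA'u]
  have huT : u ∈ satType A τ t := by
    rw [satType, Finset.mem_filter]
    exact ⟨Finset.mem_univ u, by rw [← hdegu]; exact h4 u, hut⟩
  -- the set of good candidates
  have hGcard : (satType A τ t ∩ C).card = 2 * s * (Δ + 1) := by
    rcases le_or_gt (satType A τ t).card (2 * s * (Δ + 1)) with h | h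
    · exfalso
      have heq : satType A τ t ∩ C = satType A τ t := by
        apply Finset.eq_of_subset_of_card_le Finset.inter_subset_left
        rw [hC.2 t htne, min_eq_left h]
      have : u ∈ satType A τ t ∩ C := by rw [heq]; exact huT
      exact hu (Finset.mem_inter.1 this).2
    · rw [hC.2 t htne, min_eq_right h.le]
  -- bad vertices
  set Bad1 : Finset V := (A'.image Prod.fst ∪ A'.image Prod.snd).erase u with hB1def
  have hB1card : Bad1.card ≤ 2 * s - 1 := by
    have humem : u ∈ A'.image Prod.fst ∪ A'.image Prod.snd := by
      obtain ⟨a, ha, hor⟩ := hue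
      rcases hor with h | h
      · exact Finset.mem_union_left _ (Finset.mem_image.2 ⟨a, ha, h⟩)
      · exact Finset.mem_union_right _ (Finset.mem_image.2 ⟨a, ha, h⟩)
    rw [hB1def, Finset.card_erase_of_mem humem]
    have : (A'.image Prod.fst ∪ A'.image Prod.snd).card ≤ 2 * s := by
      calc (A'.image Prod.fst ∪ A'.image Prod.snd).card
          ≤ (A'.image Prod.fst).card + (A'.image Prod.snd).card := Finset.card_union_le _ _
        _ ≤ A'.card + A'.card := Nat.add_le_add (Finset.card_image_le) (Finset.card_image_le)
        _ ≤ 2 * s := by omega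
    omega
  set Bad2 : Finset V := B.biUnion (fun e =>
      if e.1 = u then (A.filter fun a => a.2 = e.2).image Prod.fst
      else (A.filter fun a => a.1 = e.1).image Prod.snd) with hB2def
  have hB2card : Bad2.card ≤ d * Δ := by
    rw [hB2def]
    calc (B.biUnion _).card ≤ ∑ e ∈ B, (if e.1 = u
          then (A.filter fun a => a.2 = e.2).image Prod.fst
          else (A.filter fun a => a.1 = e.1).image Prod.snd).card :=
        Finset.card_biUnion_le
      _ ≤ ∑ _e ∈ B, Δ := by
          apply Finset.sum_le_sum
          intro e _
          split_ifs
          · calc ((A.filter fun a => a.2 = e.2).image Prod.fst).card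
                ≤ inDeg A e.2 := Finset.card_image_le
              _ ≤ Δ := by
                  rw [hΔdef, maxDeg]
                  exact le_trans (le_max_left _ _)
                    (Finset.le_sup (f := fun v => max (inDeg A v) (outDeg A v))
                      (Finset.mem_univ e.2))
          · calc ((A.filter fun a => a.1 = e.1).image Prod.snd).card
                ≤ outDeg A e.1 := Finset.card_image_le
              _ ≤ Δ := by
                  rw [hΔdef, maxDeg]
                  exact le_trans (le_max_right _ _)
                    (Finset.le_sup (f := fun v => max (inDeg A v) (outDeg A v))
                      (Finset.mem_univ e.1))
      _ = d * Δ := by rw [Finset.sum_const, smul_eq_mul, hddef]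
  -- find a good w
  have hlt : (Bad1 ∪ Bad2).card < (satType A τ t ∩ C).card := by
    rw [hGcard]
    have h5 : (Bad1 ∪ Bad2).card ≤ Bad1.card + Bad2.card := Finset.card_union_le _ _
    have h6 : d * Δ ≤ s * Δ := Nat.mul_le_mul_right _ hds
    have h7 : 2 * s * (Δ + 1) = 2 * (s * Δ) + 2 * s := by ring
    omega
  have hne : ((satType A τ t ∩ C) \ (Bad1 ∪ Bad2)).Nonempty := by
    rw [Finset.sdiff_nonempty]
    intro hsub
    exact absurd (Finset.card_le_card hsub) (not_le.mpr hlt)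
  obtain ⟨w, hw⟩ := hne
  have hwG := (Finset.mem_sdiff.1 hw).1
  have hwBad := (Finset.mem_sdiff.1 hw).2
  have hwC : w ∈ C := (Finset.mem_inter.1 hwG).2
  have hwsat := (Finset.mem_inter.1 hwG).1
  rw [satType, Finset.mem_filter] at hwsat
  have hwτ1 : deg A w + t ∈ τ w := hwsat.2.1
  have hwu : w ≠ u := fun h => hu (h ▸ hwC)
  have hwB1 : w ∉ Bad1 := fun h => hwBad (Finset.mem_union_left _ h)
  have hwB2 : w ∉ Bad2 := fun h => hwBad (Finset.mem_union_right _ h)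
  have hwtouch : ∀ a ∈ A', a.1 ≠ w ∧ a.2 ≠ w := by
    intro a ha
    constructor <;> intro hc
    · exact hwB1 (Finset.mem_erase.2 ⟨hwu, Finset.mem_union_left _
        (Finset.mem_image.2 ⟨a, ha, hc⟩)⟩)
    · exact hwB1 (Finset.mem_erase.2 ⟨hwu, Finset.mem_union_right _
        (Finset.mem_image.2 ⟨a, ha, hc⟩)⟩)
  -- the swap map
  set σ : V × V → V × V := fun e =>
    (if e.1 = u then w else e.1, if e.2 = u then w else e.2) with hσdef
  -- case description of σ on B
  have hcase : ∀ e ∈ B, (σ e = (w, e.2) ∧ e.1 = u ∧ e.2 ≠ u ∧ e.2 ≠ w) ∨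
      (σ e = (e.1, w) ∧ e.2 = u ∧ e.1 ≠ u ∧ e.1 ≠ w) := by
    intro e he
    have hmem := (hBmem e).1 he
    have hno := hone e he
    have htw := hwtouch e (hBsub he)
    rcases hmem.2 with h | h
    · left
      have h2u : e.2 ≠ u := fun hc => hno ⟨h, hc⟩
      exact ⟨by simp [hσdef, h, h2u], h, h2u, htw.2⟩
    · right
      have h1u : e.1 ≠ u := fun hc => hno ⟨hc, h⟩
      exact ⟨by simp [hσdef, h, h1u], h, h1u, htw.1⟩
  -- arcs of B avoid A after swap
  have hσA : ∀ e ∈ B, σ e ∉ A := by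
    intro e he hc
    have hnb : w ∉ (if e.1 = u then (A.filter fun a => a.2 = e.2).image Prod.fst
        else (A.filter fun a => a.1 = e.1).image Prod.snd) := by
      intro hmem
      exact hwB2 (Finset.mem_biUnion.2 ⟨e, he, hmem⟩)
    rcases hcase e he with ⟨hσe, h1, _, _⟩ | ⟨hσe, _, h1, _⟩
    · rw [if_pos h1] at hnb
      exact hnb (Finset.mem_image.2 ⟨(w, e.2), Finset.mem_filter.2 ⟨hσe ▸ hc, rfl⟩, rfl⟩)
    · rw [if_neg h1] at hnb
      exact hnb (Finset.mem_image.2 ⟨(e.1, w), Finset.mem_filter.2 ⟨hσe ▸ hc, rfl⟩, rfl⟩)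
  -- injectivity of σ on B
  have hinj : ∀ e1 ∈ B, ∀ e2 ∈ B, σ e1 = σ e2 → e1 = e2 := by
    intro e1 he1 e2 he2 heq
    rcases hcase e1 he1 with ⟨hs1', hu1, _, hw1⟩ | ⟨hs1', hu1, _, hw1⟩ <;>
      rcases hcase e2 he2 with ⟨hs2', hu2, _, hw2⟩ | ⟨hs2', hu2, _, hw2⟩ <;>
      rw [hs1', hs2'] at heq <;> simp only [Prod.mk.injEq] at heq
    · exact Prod.ext (hu1.trans hu2.symm) heq.2
    · exact absurd heq.2 hw1
    · exact absurd heq.1 hw1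
    · exact Prod.ext heq.1 (hu1.trans hu2.symm)
  set N : Finset (V × V) := B.image σ with hNdef
  have hNmem : ∀ a ∈ N, ∃ e ∈ B, σ e = a := by
    intro a ha
    obtain ⟨e, he, heq⟩ := Finset.mem_image.1 ha
    exact ⟨e, he, heq⟩
  -- every arc of N has an endpoint w, avoids A, is not a loop, avoids u
  have hNprop : ∀ a ∈ N, (a.1 = w ∨ a.2 = w) ∧ a ∉ A ∧ a.1 ≠ a.2 ∧ a.1 ≠ u ∧ a.2 ≠ u := by
    intro a ha
    obtain ⟨e, he, heq⟩ := hNmem a ha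
    have hA' := hσA e he
    rcases hcase e he with ⟨hσe, _, h2u, h2w⟩ | ⟨hσe, _, h1u, h1w⟩
    · rw [← heq, hσe]
      rw [hσe] at hA'
      exact ⟨Or.inl rfl, hA', fun hc => h2w hc.symm, hwu, h2u⟩
    · rw [← heq, hσe]
      rw [hσe] at hA'
      exact ⟨Or.inr rfl, hA', h1w, h1u, hwu⟩
  have hdisjN : Disjoint (A' \ B) N := by
    rw [Finset.disjoint_right]
    intro a haN haS
    have ha' : a ∈ A' := (Finset.mem_sdiff.1 haS).1
    rcases (hNprop a haN).1 with h | h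
    · exact (hwtouch a ha').1 h
    · exact (hwtouch a ha').2 h
  set A'' : Finset (V × V) := (A' \ B) ∪ N with hA''def
  refine ⟨A'', ?_, ?_, ?_, ?_, ?_⟩
  · intro a ha
    rcases Finset.mem_union.1 ha with h | h
    · exact h1 a (Finset.mem_sdiff.1 h).1
    · exact (hNprop a h).2.1
  · intro v hv
    rcases Finset.mem_union.1 hv with h | h
    · exact h2 v (Finset.mem_sdiff.1 h).1
    · exact (hNprop _ h).2.2.1 rfl
  · calc A''.card ≤ (A' \ B).card + N.card := Finset.card_union_le _ _
      _ ≤ (A'.card - d) + d := by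
          rw [Finset.card_sdiff_of_subset hBsub]
          exact Nat.add_le_add le_rfl Finset.card_image_le
      _ ≤ A'.card := by
          have := Finset.card_le_card hBsub
          omega
      _ ≤ s := h3
  · -- degrees
    have hdisjAA'' : Disjoint A A'' := by
      rw [Finset.disjoint_right]
      intro a ha
      rcases Finset.mem_union.1 ha with h | h
      · exact h1 a (Finset.mem_sdiff.1 h).1
      · exact (hNprop a h).2.1
    have hsd : ∀ e ∈ A' \ B, e.1 ≠ u ∧ e.2 ≠ u := by
      intro e he
      obtain ⟨he', heB⟩ := Finset.mem_sdiff.1 he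
      constructor <;> intro hc <;> exact heB ((hBmem e).2 ⟨he', by tauto⟩)
    -- indegree of A'' at any v
    have hinN : ∀ v, inDeg N v = (B.filter fun e => (σ e).2 = v).card := by
      intro v
      rw [inDeg, hNdef, Finset.filter_image]
      exact Finset.card_image_of_injOn (fun x hx y hy =>
        hinj x (Finset.mem_filter.1 hx).1 y (Finset.mem_filter.1 hy).1)
    have houtN : ∀ v, outDeg N v = (B.filter fun e => (σ e).1 = v).card := by
      intro v
      rw [outDeg, hNdef, Finset.filter_image]
      exact Finset.card_image_of_injOn (fun x hx y hy =>
        hinj x (Finset.mem_filter.1 hx).1 y (Finset.mem_filter.1 hy).1)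
    have hdegA'' : ∀ v, deg A'' v = deg (A' \ B) v + deg N v := fun v =>
      deg_union hdisjN v
    intro v
    rw [deg_union hdisjAA'']
    by_cases hvu : v = u
    · subst hvu
      have hin0 : inDeg (A' \ B) v = 0 := by
        rw [inDeg, Finset.card_eq_zero, Finset.filter_eq_empty_iff]
        intro e he
        exact (hsd e he).2
      have hout0 : outDeg (A' \ B) v = 0 := by
        rw [outDeg, Finset.card_eq_zero, Finset.filter_eq_empty_iff]
        intro e he
        exact (hsd e he).1
      have hinN0 : inDeg N v = 0 := by
        rw [inDeg, Finset.card_eq_zero, Finset.filter_eq_empty_iff]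
        intro e he
        exact (hNprop e he).2.2.2.2
      have houtN0 : outDeg N v = 0 := by
        rw [outDeg, Finset.card_eq_zero, Finset.filter_eq_empty_iff]
        intro e he
        exact (hNprop e he).2.2.2.1
      have : deg A'' v = (0, 0) := by
        rw [hdegA'' v, deg, deg, hin0, hout0, hinN0, houtN0]
        rfl
      rw [this]
      rw [Prod.mk_zero_zero, add_zero]; exact hut
    · by_cases hvw : v = w
      · subst hvw
        have hin0 : inDeg (A' \ B) v = 0 := by
          rw [inDeg, Finset.card_eq_zero, Finset.filter_eq_empty_iff]
          intro e he
          exact (hwtouch e (Finset.mem_sdiff.1 he).1).2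
        have hout0 : outDeg (A' \ B) v = 0 := by
          rw [outDeg, Finset.card_eq_zero, Finset.filter_eq_empty_iff]
          intro e he
          exact (hwtouch e (Finset.mem_sdiff.1 he).1).1
        have hinNt : inDeg N v = t.1 := by
          rw [hinN]
          have heq2 : (B.filter fun e => (σ e).2 = v) = B.filter fun e => e.2 = u := by
            apply Finset.filter_congr
            intro e he
            rcases hcase e he with ⟨hσe, _, h2u, h2w⟩ | ⟨hσe, h2u, _, _⟩ <;> rw [hσe]
            · exact iff_of_false h2w h2u
            · exact iff_of_true rfl h2u
          rw [heq2, htdef]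
          rfl
        have houtNt : outDeg N v = t.2 := by
          rw [houtN]
          have heq2 : (B.filter fun e => (σ e).1 = v) = B.filter fun e => e.1 = u := by
            apply Finset.filter_congr
            intro e he
            rcases hcase e he with ⟨hσe, h1u, _, _⟩ | ⟨hσe, _, h1u, h1w⟩ <;> rw [hσe]
            · exact iff_of_true rfl h1u
            · exact iff_of_false h1w h1u
          rw [heq2, htdef]
          rfl
        have : deg A'' v = t := by
          rw [hdegA'' v, deg, deg, hin0, hout0, hinNt, houtNt]
          simp [Prod.ext_iff]
        rw [this]
        exact hwτ1
      · -- generic vertex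
        have hinNv : inDeg N v = inDeg B v := by
          rw [hinN]
          congr 1
          apply Finset.filter_congr
          intro e he
          rcases hcase e he with ⟨hσe, _, _, _⟩ | ⟨hσe, h2u, _, _⟩ <;> rw [hσe]
          exact iff_of_false (fun h => hvw h.symm) (fun h => hvu (h.symm.trans h2u))
        have houtNv : outDeg N v = outDeg B v := by
          rw [houtN]
          congr 1
          apply Finset.filter_congr
          intro e he
          rcases hcase e he with ⟨hσe, h1u, _, _⟩ | ⟨hσe, _, _, _⟩ <;> rw [hσe]
          exact iff_of_false (fun h => hvw h.symm) (fun h => hvu (h.symm.trans h1u))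
        have hsplit : deg (A' \ B) v + deg B v = deg A' v := by
          rw [← deg_union (Finset.sdiff_disjoint), Finset.sdiff_union_of_subset hBsub]
        have : deg A'' v = deg A' v := by
          rw [hdegA'' v, ← hsplit, deg, deg, hinNv, houtNv]
          rfl
        rw [this, ← deg_union hdisjAA']
        exact h4 v
  · -- measure decreases
    set f : V × V → ℕ := fun e => ((if e.1 ∈ C then 0 else 1) + (if e.2 ∈ C then 0 else 1))
      with hfdef
    have hmeq : meas C A'' = meas C (A' \ B) + ∑ e ∈ B, f (σ e) := by
      rw [hA''def, meas, Finset.sum_union hdisjN, hNdef, Finset.sum_image hinj]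
      rfl
    have hmA' : meas C A' = meas C (A' \ B) + ∑ e ∈ B, f e := by
      rw [meas, meas]
      exact (Finset.sum_sdiff hBsub).symm
    have hstep : ∀ e ∈ B, f (σ e) + 1 ≤ f e := by
      intro e he
      rcases hcase e he with ⟨hσe, h1u, _, _⟩ | ⟨hσe, h2u, _, _⟩
      · rw [hσe]
        show ((if w ∈ C then 0 else 1) + (if e.2 ∈ C then 0 else 1)) + 1 ≤
          (if e.1 ∈ C then 0 else 1) + (if e.2 ∈ C then 0 else 1)
        rw [if_pos hwC, h1u, if_neg hu]
        omega
      · rw [hσe]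
        show ((if e.1 ∈ C then 0 else 1) + (if w ∈ C then 0 else 1)) + 1 ≤
          (if e.1 ∈ C then 0 else 1) + (if e.2 ∈ C then 0 else 1)
        rw [if_pos hwC, h2u, if_neg hu]
    have hsum : ∑ e ∈ B, f (σ e) < ∑ e ∈ B, f e :=
      Finset.sum_lt_sum_of_nonempty hBne (fun e he => by have := hstep e he; omega)
    omega

/-- **Solutions inside a `2s(Δ_D+1)`-type set.** If a `DDConC` instance has a
solution, then it has one all of whose arcs lie inside a given
`2s(Δ_D+1)`-type set `C`. -/
theorem solution_in_type_set {V : Type*} [Fintype V] [DecidableEq V]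
    (A : Finset (V × V)) (hA : ∀ v : V, (v, v) ∉ A)
    (s : ℕ) (τ : V → Finset (ℕ × ℕ))
    (C : Finset V)
    (hC : IsTypeSet A τ (2 * s * (maxDeg A + 1)) C)
    (hex : ∃ A' : Finset (V × V),
      (∀ a ∈ A', a ∉ A) ∧ (∀ v : V, (v, v) ∉ A') ∧ A'.card ≤ s ∧
      (∀ v : V, deg (A ∪ A') v ∈ τ v)) :
    ∃ A'' : Finset (V × V),
      A'' ⊆ C ×ˢ C ∧
      (∀ a ∈ A'', a ∉ A) ∧ (∀ v : V, (v, v) ∉ A'') ∧ A''.card ≤ s ∧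
      (∀ v : V, deg (A ∪ A'') v ∈ τ v) := by
  classical
  obtain ⟨A0, h1, h2, h3, h4⟩ := hex
  suffices H : ∀ (n : ℕ) (A' : Finset (V × V)), meas C A' ≤ n →
      (∀ a ∈ A', a ∉ A) → (∀ v : V, (v, v) ∉ A') → A'.card ≤ s →
      (∀ v : V, deg (A ∪ A') v ∈ τ v) →
      ∃ A'' : Finset (V × V), A'' ⊆ C ×ˢ C ∧ (∀ a ∈ A'', a ∉ A) ∧
        (∀ v : V, (v, v) ∉ A'') ∧ A''.card ≤ s ∧ (∀ v : V, deg (A ∪ A'') v ∈ τ v) by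
    exact H (meas C A0) A0 le_rfl h1 h2 h3 h4
  intro n
  induction n with
  | zero =>
    intro A' hm h1 h2 h3 h4
    exact ⟨A', meas_zero_subset (Nat.le_zero.1 hm), h1, h2, h3, h4⟩
  | succ n ih =>
    intro A' hm h1 h2 h3 h4
    by_cases h0 : meas C A' = 0
    · exact ⟨A', meas_zero_subset h0, h1, h2, h3, h4⟩
    · -- find an arc with an endpoint outside C
      have hex' : ∃ e ∈ A', e.1 ∉ C ∨ e.2 ∉ C := by
        by_contra hc
        push_neg at hc
        apply h0
        rw [meas, Finset.sum_eq_zero_iff]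
        intro e he
        have := hc e he
        simp [this.1, this.2]
      obtain ⟨e, he, hor⟩ := hex'
      have key : ∃ u : V, u ∉ C ∧ ∃ a ∈ A', a.1 = u ∨ a.2 = u := by
        rcases hor with h | h
        · exact ⟨e.1, h, e, he, Or.inl rfl⟩
        · exact ⟨e.2, h, e, he, Or.inr rfl⟩
      obtain ⟨u, hu, hue⟩ := key
      obtain ⟨A'', hh1, hh2, hh3, hh4, hh5⟩ :=
        swap_step A hA s τ C hC A' h1 h2 h3 h4 u hu hue
      exact ih A'' (by omega) hh1 hh2 hh3 hh4
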